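/- arXiv:1907.12149 — 2 statements merged into one kernel-verified Lean document; each statement's English description precedes it below -/
import Mathlib

section
/- For every finite simple graph G, if the vertices of G are colored greedily along an ordering σ so that each vertex v receives a color distinct from all colors of vertices in S_2[G,σ,v] \ {v}, then whenever two vertices u,v with u strongly 2-reachable from v receive distinct colors, the resulting proper coloring has no bicolored cycle; hence the acyclic chromatic number satisfies χ_a(G) ≤ scol_2(G). -/
open SimpleGraph

/-- `y` is weakly `r`-reachable from `x` w.r.t. the ordering `le`:
`y ≤ x` and there is an `x,y`-path of length at most `r` all of whose
vertices `z` satisfy `y ≤ z`. -/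
def wreach {V : Type*} (G : SimpleGraph V) (le : V → V → Prop) (r : ℕ) (x : V) : Set V :=
  {y | le y x ∧ ∃ p : G.Walk x y, p.IsPath ∧ p.length ≤ r ∧ ∀ z ∈ p.support, le y z}

/-- `y` is strongly `r`-reachable from `x` w.r.t. the ordering `le`:
`y ≤ x` and there is an `x,y`-path of length at most `r` all of whose
vertices `z ≠ y` satisfy `x ≤ z`. -/
def sreach {V : Type*} (G : SimpleGraph V) (le : V → V → Prop) (r : ℕ) (x : V) : Set V :=
  {y | le y x ∧ ∃ p : G.Walk x y, p.IsPath ∧ p.length ≤ r ∧ ∀ z ∈ p.support, z ≠ y → le x z}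

/-- `wcol_r(G, σ)`. -/
noncomputable def wcolOn {V : Type*} [Fintype V] (G : SimpleGraph V)
    (le : V → V → Prop) (r : ℕ) : ℕ :=
  Finset.univ.sup fun x => Nat.card (wreach G le r x)

/-- `scol_r(G, σ)`. -/
noncomputable def scolOn {V : Type*} [Fintype V] (G : SimpleGraph V)
    (le : V → V → Prop) (r : ℕ) : ℕ :=
  Finset.univ.sup fun x => Nat.card (sreach G le r x)

/-- The weak `r`-coloring number. -/
noncomputable def wcol {V : Type*} [Fintype V] (G : SimpleGraph V) (r : ℕ) : ℕ :=
  ⨅ σ : LinearOrder V, wcolOn G σ.le r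

/-- The strong `r`-coloring number. -/
noncomputable def scol {V : Type*} [Fintype V] (G : SimpleGraph V) (r : ℕ) : ℕ :=
  ⨅ σ : LinearOrder V, scolOn G σ.le r

/-- `col(G, σ)`: one more than the max back-degree. -/
noncomputable def colOn {V : Type*} [Fintype V] (G : SimpleGraph V)
    (lt : V → V → Prop) : ℕ :=
  Finset.univ.sup fun x => 1 + Nat.card {y | G.Adj x y ∧ lt y x}

/-- The coloring number `col(G)`. -/
noncomputable def col {V : Type*} [Fintype V] (G : SimpleGraph V) : ℕ :=
  ⨅ σ : LinearOrder V, colOn G σ.lt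


section Aux
variable {V : Type*}

lemma exists_fresh [Finite V] {k : ℕ} (f : V → Fin k) (s : Set V) (v : V)
    (hv : v ∈ s) (hcard : Nat.card s ≤ k) :
    ∃ c : Fin k, ∀ u ∈ s, u ≠ v → f u ≠ c := by
  classical
  cases nonempty_fintype V
  have hsc : s.toFinset.card ≤ k := by
    rwa [Nat.card_coe_set_eq, Set.ncard_eq_toFinset_card'] at hcard
  have hvF : v ∈ s.toFinset := Set.mem_toFinset.mpr hv
  have h1 : ((s.toFinset.erase v).image f).card < Fintype.card (Fin k) := by
    rw [Fintype.card_fin]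
    calc ((s.toFinset.erase v).image f).card ≤ (s.toFinset.erase v).card :=
          Finset.card_image_le
      _ < s.toFinset.card := Finset.card_erase_lt_of_mem hvF
      _ ≤ k := hsc
  have hne : ∃ c : Fin k, c ∉ (s.toFinset.erase v).image f := by
    by_contra h
    push_neg at h
    have : (s.toFinset.erase v).image f = Finset.univ :=
      Finset.eq_univ_iff_forall.mpr h
    rw [this, Finset.card_univ] at h1
    exact lt_irrefl _ h1
  obtain ⟨c, hc⟩ := hne
  refine ⟨c, fun u hu hne' hfc => hc ?_⟩
  exact Finset.mem_image.mpr ⟨u, Finset.mem_erase.mpr ⟨hne', Set.mem_toFinset.mpr hu⟩, hfc⟩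

lemma self_mem_sreach (G : SimpleGraph V) (σ : LinearOrder V) (r : ℕ) (v : V) :
    v ∈ sreach G σ.le r v := by
  refine ⟨σ.le_refl v, Walk.nil, Walk.IsPath.nil, Nat.zero_le r, ?_⟩
  intro z hz hzv
  simp only [Walk.support_nil, List.mem_singleton] at hz
  exact absurd hz hzv

lemma exists_greedy_coloring [Fintype V] (G : SimpleGraph V) (σ : LinearOrder V)
    {k : ℕ} (hk : ∀ v, Nat.card (sreach G σ.le 2 v) ≤ k) :
    ∃ C : V → Fin k, ∀ v u, u ∈ sreach G σ.le 2 v → u ≠ v → C u ≠ C v := by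
  classical
  rcases isEmpty_or_nonempty V with h | h
  · exact ⟨fun v => h.elim v, fun v => h.elim v⟩
  obtain ⟨v0⟩ := h
  have hk0 : 0 < k := by
    have h1 : 0 < Nat.card (sreach G σ.le 2 v0) := by
      haveI : Nonempty (sreach G σ.le 2 v0) := ⟨⟨v0, self_mem_sreach G σ 2 v0⟩⟩
      exact Nat.card_pos
    exact lt_of_lt_of_le h1 (hk v0)
  letI := σ
  haveI : WellFoundedLT V := Finite.to_wellFoundedLT
  have hlt : ∀ {u v : V}, σ.le u v → u ≠ v → u < v := fun h hne =>
    lt_of_le_of_ne h hne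
  let F : ∀ v : V, (∀ u, u < v → Fin k) → Fin k := fun v ih =>
    if h : ∃ c : Fin k, ∀ u, u ∈ sreach G σ.le 2 v → u ≠ v →
        ∀ hl : u < v, ih u hl ≠ c then h.choose else ⟨0, hk0⟩
  let C : V → Fin k := fun v => WellFounded.fix wellFounded_lt F v
  have hfix : ∀ v, C v = F v (fun u _ => C u) := fun v =>
    WellFounded.fix_eq wellFounded_lt F v
  refine ⟨C, fun v u hu hne => ?_⟩
  have hex : ∃ c : Fin k, ∀ u, u ∈ sreach G σ.le 2 v → u ≠ v →
      ∀ _hl : u < v, C u ≠ c := by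
    obtain ⟨c, hc⟩ := exists_fresh C (sreach G σ.le 2 v) v
      (self_mem_sreach G σ 2 v) (hk v)
    exact ⟨c, fun u hu hne _ => hc u hu hne⟩
  have : C v = hex.choose := by
    rw [hfix v]
    exact dif_pos hex
  rw [this]
  exact hex.choose_spec u hu hne (hlt hu.1 hne)

end Aux

lemma firstEdge_mem {V : Type*} {G : SimpleGraph V} {a b : V} (p : G.Walk a b)
    (hp : ¬ p.Nil) : s(a, p.getVert 1) ∈ p.edges := by
  cases p with
  | nil => simp at hp
  | cons h q => simp [Walk.getVert_cons_succ]


/-- the acyclic chromatic number is at most `scol_2(G)`. -/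
theorem acyclic_chromatic_le_scol_two {V : Type*} [Fintype V] (G : SimpleGraph V) :
    ∃ C : V → Fin (scol G 2),
      (∀ u v, G.Adj u v → C u ≠ C v) ∧
      ∀ c₁ c₂ : Fin (scol G 2),
        (G.induce {v | C v = c₁ ∨ C v = c₂}).IsAcyclic := by
  classical
  haveI hLO : Nonempty (LinearOrder V) :=
    ⟨LinearOrder.lift' (Fintype.equivFin V) (Fintype.equivFin V).injective⟩
  have hmem : scol G 2 ∈ Set.range fun σ : LinearOrder V => scolOn G σ.le 2 := by
    have h : sInf (Set.range fun σ : LinearOrder V => scolOn G σ.le 2) ∈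
        Set.range fun σ : LinearOrder V => scolOn G σ.le 2 :=
      Nat.sInf_mem (Set.range_nonempty _)
    exact h
  obtain ⟨σ, hσ0⟩ := hmem
  have hσ : scolOn G σ.le 2 = scol G 2 := hσ0
  have hk : ∀ v, Nat.card (sreach G σ.le 2 v) ≤ scol G 2 := fun v => by
    calc Nat.card (sreach G σ.le 2 v)
        ≤ Finset.univ.sup (fun x => Nat.card (sreach G σ.le 2 x)) :=
          Finset.le_sup (f := fun x => Nat.card (sreach G σ.le 2 x)) (Finset.mem_univ v)
      _ = scol G 2 := hσ
  obtain ⟨C, hC⟩ := exists_greedy_coloring G σ hk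
  have hprop : ∀ u v, G.Adj u v → C u ≠ C v := by
    have key : ∀ a b : V, G.Adj a b → σ.le a b → C a ≠ C b := by
      intro a b hab hle
      refine hC b a ⟨hle, Walk.cons hab.symm Walk.nil, ?_, by simp, ?_⟩ hab.ne
      · simp [Walk.isPath_def, hab.ne']
      · intro z hz hza
        simp only [Walk.support_cons, Walk.support_nil, List.mem_cons,
          List.mem_singleton, List.not_mem_nil, or_false] at hz
        rcases hz with rfl | rfl
        · exact σ.le_refl z
        · exact absurd rfl hza
    intro u v hadj
    rcases σ.le_total u v with h | h
    · exact key u v hadj h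
    · exact (key v u hadj.symm h).symm
  refine ⟨C, hprop, ?_⟩
  intro c₁ c₂
  set s : Set V := {v | C v = c₁ ∨ C v = c₂} with hs
  intro x cyc hcyc
  let f : G.induce s ↪g G := SimpleGraph.Embedding.induce s
  let cy : G.Walk (x : V) (x : V) := cyc.map f.toHom
  have hcy : cy.IsCycle := (Walk.map_isCycle_iff_of_injective f.injective).mpr hcyc
  have hsupp : ∀ z ∈ cy.support, z ∈ s := by
    intro z hz
    have key : ∀ {a b} (p : (G.induce s).Walk a b), ∀ z ∈ (p.map f.toHom).support, z ∈ s :=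
      fun p z hz => by
        rw [Walk.support_map, List.mem_map] at hz
        obtain ⟨a, _, rfl⟩ := hz
        exact a.2
    exact key cyc z hz
  letI := σ
  have hsne : ((x : V)) ∈ cy.support.toFinset :=
    List.mem_toFinset.mpr cy.start_mem_support
  obtain ⟨v, hv, hmax⟩ : ∃ v, v ∈ cy.support ∧ ∀ z ∈ cy.support, z ≤ v := by
    refine ⟨cy.support.toFinset.max' ⟨_, hsne⟩, ?_, ?_⟩
    · exact List.mem_toFinset.mp (Finset.max'_mem _ _)
    · exact fun z hz => Finset.le_max' _ z (List.mem_toFinset.mpr hz)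
  have hc'A : (cy.rotate v hv).IsCycle := hcy.rotate hv
  have hsvA : ∀ z ∈ (cy.rotate v hv).support, z ∈ s ∧ z ≤ v := by
    intro z hz
    have hz' : z ∈ cy.support := by
      rcases (Walk.mem_support_iff _).mp hz with rfl | htl
      · exact hv
      · have : z ∈ cy.support.tail := (Walk.support_rotate cy v hv).mem_iff.mp htl
        rw [Walk.support_eq_cons cy]
        exact List.mem_cons_of_mem _ this
    exact ⟨hsupp z hz', hmax z hz'⟩
  obtain ⟨c', hc', hsv⟩ : ∃ c' : G.Walk v v, c'.IsCycle ∧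
      ∀ z ∈ c'.support, z ∈ s ∧ z ≤ v := ⟨cy.rotate v hv, hc'A, hsvA⟩
  cases c' with
  | nil => simpa using hc'.three_le_length
  | cons ha q =>
    rename_i u
    have hlen : 2 ≤ q.length := by
      have := hc'.three_le_length
      simpa using this
    have hqnil : ¬ q.Nil := by
      rw [Walk.not_nil_iff_lt_length]; omega
    have hqrnil : ¬ q.reverse.Nil := by
      rw [Walk.not_nil_iff_lt_length, Walk.length_reverse]; omega
    obtain ⟨w, haw, hwq, hedgew⟩ :
        ∃ w, G.Adj v w ∧ w ∈ q.support ∧ s(v, w) ∈ q.edges := by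
      refine ⟨q.reverse.getVert 1, Walk.adj_snd hqrnil, ?_, ?_⟩
      · have : q.reverse.getVert 1 ∈ q.reverse.support := by
          rw [Walk.mem_support_iff_exists_getVert]
          exact ⟨1, rfl, by rw [Walk.length_reverse]; omega⟩
        rwa [Walk.support_reverse, List.mem_reverse] at this
      · have := firstEdge_mem q.reverse hqrnil
        rwa [Walk.edges_reverse, List.mem_reverse] at this
    have hnodup : ((Walk.cons ha q).edges).Nodup := hc'.isCircuit.isTrail.edges_nodup
    have hheadnot : s(v, u) ∉ q.edges := by
      rw [Walk.edges_cons] at hnodup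
      exact (List.nodup_cons.mp hnodup).1
    have huw : u ≠ w := by
      rintro rfl
      exact hheadnot hedgew
    have hus : u ∈ s ∧ u ≤ v := hsv u (by simp [Walk.support_cons, q.start_mem_support])
    have hws : w ∈ s ∧ w ≤ v := hsv w (by
      simp only [Walk.support_cons, List.mem_cons]
      exact Or.inr hwq)
    have hvs : v ∈ s := (hsv v (Walk.start_mem_support _)).1
    have hCu : C u ≠ C v := hprop u v ha.symm
    have hCw : C w ≠ C v := hprop w v haw.symm
    have hCuw : C u = C w := by
      have h1 : C v = c₁ ∨ C v = c₂ := hvs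
      have h2 : C u = c₁ ∨ C u = c₂ := hus.1
      have h3 : C w = c₁ ∨ C w = c₂ := hws.1
      rcases h1 with h1 | h1 <;> rcases h2 with h2 | h2 <;> rcases h3 with h3 | h3 <;>
        first
        | exact absurd (h2.trans h1.symm) hCu
        | exact absurd (h3.trans h1.symm) hCw
        | rw [h2, h3]
    have hune : u ≠ v := ha.ne'
    have hwne : w ≠ v := haw.ne'
    rcases σ.le_total u w with hle | hle
    · have hmemr : u ∈ sreach G σ.le 2 w := by
        refine ⟨hle, Walk.cons haw.symm (Walk.cons ha Walk.nil), ?_, by simp, ?_⟩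
        · simp [Walk.isPath_def, haw.ne', Ne.symm huw, ha.ne]
        · intro z hz hzu
          simp only [Walk.support_cons, Walk.support_nil, List.mem_cons,
            List.mem_singleton, List.not_mem_nil, or_false] at hz
          rcases hz with rfl | rfl | rfl
          · exact le_refl _
          · exact hws.2
          · exact absurd rfl hzu
      exact hC w u hmemr huw hCuw
    · have hmemr : w ∈ sreach G σ.le 2 u := by
        refine ⟨hle, Walk.cons ha.symm (Walk.cons haw Walk.nil), ?_, by simp, ?_⟩
        · simp [Walk.isPath_def, ha.ne', huw, haw.ne]
        · intro z hz hzw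
          simp only [Walk.support_cons, Walk.support_nil, List.mem_cons,
            List.mem_singleton, List.not_mem_nil, or_false] at hz
          rcases hz with rfl | rfl | rfl
          · exact le_refl _
          · exact hus.2
          · exact absurd rfl hzw
      exact hC u w hmemr (Ne.symm huw) hCuw.symm
end

section
/- Let G_1, …, G_k be finite simple graphs on a common vertex set V and r_1, …, r_k ∈ ℕ positive. Then there exists a linear ordering σ* of V such that for all i, scol_{r_i}(G_i, σ*) ≤ (k+1)·(wcol_{2r_i}(G_i))² ≤ (k+1)·(scol_{2r_i}(G_i))^{4r_i}. -/
open SimpleGraph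

section Basics

variable {V : Type*} {G : SimpleGraph V} {le : V → V → Prop} {r r' : ℕ} {x : V}

lemma self_mem_wreach (h : le x x) : x ∈ wreach G le r x :=
  ⟨h, Walk.nil, Walk.IsPath.nil, by simp, by simp [h]⟩

lemma self_mem_sreach_s12 (h : le x x) : x ∈ sreach G le r x :=
  ⟨h, Walk.nil, Walk.IsPath.nil, by simp, by simp [h]⟩

lemma wreach_mono (h : r ≤ r') : wreach G le r x ⊆ wreach G le r' x := by
  rintro y ⟨h1, p, hp, hl, hs⟩
  exact ⟨h1, p, hp, hl.trans h, hs⟩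

lemma sreach_mono (h : r ≤ r') : sreach G le r x ⊆ sreach G le r' x := by
  rintro y ⟨h1, p, hp, hl, hs⟩
  exact ⟨h1, p, hp, hl.trans h, hs⟩

variable [Fintype V]

lemma ncard_wreach_le : (wreach G le r x).ncard ≤ wcolOn G le r := by
  rw [← Nat.card_coe_set_eq]
  exact Finset.le_sup (f := fun x => Nat.card (wreach G le r x)) (Finset.mem_univ x)

lemma ncard_sreach_le : (sreach G le r x).ncard ≤ scolOn G le r := by
  rw [← Nat.card_coe_set_eq]
  exact Finset.le_sup (f := fun x => Nat.card (sreach G le r x)) (Finset.mem_univ x)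

lemma wcolOn_mono (h : r ≤ r') : wcolOn G le r ≤ wcolOn G le r' := by
  apply Finset.sup_le
  intro x _
  rw [Nat.card_coe_set_eq]
  calc (wreach G le r x).ncard ≤ (wreach G le r' x).ncard :=
        Set.ncard_le_ncard (wreach_mono h) (Set.toFinite _)
    _ ≤ wcolOn G le r' := ncard_wreach_le

end Basics

section KeyAux

variable {V : Type*} {G : SimpleGraph V} {le : V → V → Prop}

lemma key_aux (htot : ∀ u v, le u v ∨ le v u) {s : ℕ} {x : V} :
    ∀ (u y : V) (q : G.Walk u y) (pre : G.Walk x u),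
      (pre.append q).IsPath →
      (∀ z ∈ pre.support, le x z) →
      (∀ z ∈ q.support, le y z) →
      (∃ w ∈ q.support, ¬ le x w) →
      pre.length + q.length ≤ s →
      ∃ z, z ∈ sreach G le s x ∧ y ∈ wreach G le (s-1) z := by
  intro u y q
  induction q with
  | nil =>
    intro pre _ hpre _ hw _
    obtain ⟨w, hw1, hw2⟩ := hw
    simp only [Walk.support_nil, List.mem_singleton] at hw1
    subst hw1
    exact absurd (hpre _ (Walk.end_mem_support pre)) hw2
  | @cons u u' y h q ih =>
    intro pre hpath hpre hq hw hlen
    have heq : (pre.concat h).append q = pre.append (Walk.cons h q) := by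
      rw [Walk.concat_eq_append, ← Walk.append_assoc, Walk.cons_append, Walk.nil_append]
    by_cases hxu' : le x u'
    · -- recurse with longer prefix
      refine ih (pre.concat h) ?_ ?_ ?_ ?_ ?_
      · rw [heq]; exact hpath
      · intro z hz
        simp only [Walk.support_concat, List.concat_eq_append, List.mem_append, List.mem_singleton] at hz
        rcases hz with hz | rfl
        · exact hpre z hz
        · exact hxu'
      · intro z hz
        exact hq z (by rw [Walk.support_cons]; exact List.mem_cons_of_mem _ hz)
      · obtain ⟨w, hw1, hw2⟩ := hw
        rw [Walk.support_cons, List.mem_cons] at hw1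
        rcases hw1 with rfl | hw1
        · exact absurd (hpre _ (Walk.end_mem_support pre)) hw2
        · exact ⟨w, hw1, hw2⟩
      · rw [Walk.length_concat]
        rw [Walk.length_cons] at hlen
        omega
    · -- u' is the splitting vertex
      have hu'x : le u' x := (htot x u').resolve_left hxu'
      have hpath1 : (pre.concat h).IsPath := by
        have h2 := hpath; rw [← heq] at h2; exact h2.of_append_left
      have hq' : q.IsPath := by
        have h2 := hpath; rw [← heq] at h2; exact h2.of_append_right
      refine ⟨u', ⟨hu'x, pre.concat h, hpath1, ?_, ?_⟩, ?_⟩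
      · rw [Walk.length_concat]
        rw [Walk.length_cons] at hlen
        omega
      · intro z hz hzne
        simp only [Walk.support_concat, List.concat_eq_append, List.mem_append, List.mem_singleton] at hz
        rcases hz with hz | rfl
        · exact hpre z hz
        · exact absurd rfl hzne
      · have hyu' : le y u' := hq u' (by
          rw [Walk.support_cons]
          exact List.mem_cons_of_mem _ q.start_mem_support)
        refine ⟨hyu', q, hq', ?_, ?_⟩
        · rw [Walk.length_cons] at hlen
          omega
        · intro z hz
          exact hq z (by rw [Walk.support_cons]; exact List.mem_cons_of_mem _ hz)

lemma wreach_subset_biUnion (hrefl : ∀ v, le v v) (htot : ∀ u v, le u v ∨ le v u)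
    {t : ℕ} (x : V) :
    wreach G le t x ⊆ ⋃ z ∈ sreach G le t x, wreach G le (t-1) z := by
  rintro y ⟨hyx, p, hp, hl, hs⟩
  by_cases hall : ∀ z ∈ p.support, le x z
  · exact Set.mem_biUnion (⟨hyx, p, hp, hl, fun z hz _ => hall z hz⟩ : y ∈ sreach G le t x)
      (self_mem_wreach (hrefl y))
  · push_neg at hall
    obtain ⟨z, hz1, hz2⟩ := key_aux htot x y p Walk.nil
      (by rw [Walk.nil_append]; exact hp)
      (by intro z hz
          simp only [Walk.support_nil, List.mem_singleton] at hz
          simpa [hz] using hrefl x)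
      hs hall (by simpa using hl)
    exact Set.mem_biUnion hz1 hz2

end KeyAux

section Pow

variable {V : Type*} [Fintype V] {G : SimpleGraph V} {le : V → V → Prop}

omit [Fintype V] in
lemma wreach_zero (x : V) : wreach G le 0 x ⊆ {x} := by
  rintro y ⟨h1, p, hp, hl, hs⟩
  have : p.length = 0 := Nat.le_zero.mp hl
  have := (Walk.eq_of_length_eq_zero this)
  simp [this.symm]

lemma ncard_wreach_le_pow (hrefl : ∀ v, le v v) (htot : ∀ u v, le u v ∨ le v u)
    {s : ℕ} : ∀ t ≤ s, ∀ x : V, (wreach G le t x).ncard ≤ (scolOn G le s) ^ t := by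
  intro t
  induction t with
  | zero =>
    intro _ x
    simpa using Set.ncard_le_ncard (wreach_zero x) (Set.toFinite _)
  | succ t ih =>
    intro hts x
    classical
    set S := scolOn G le s with hS
    have hsub := wreach_subset_biUnion (G := G) hrefl htot (t := t + 1) x
    set F := (sreach G le (t+1) x).toFinset with hF
    have hsub2 : wreach G le (t+1) x ⊆
        ↑(F.biUnion (fun z => (wreach G le t z).toFinset)) := by
      intro y hy
      obtain ⟨z, hz1, hz2⟩ := Set.mem_iUnion₂.mp (hsub hy)
      simp only [Finset.coe_biUnion, Set.mem_iUnion, Finset.mem_coe, Finset.mem_biUnion]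
      exact ⟨z, by simpa [hF] using hz1, by simpa using hz2⟩
    calc (wreach G le (t+1) x).ncard
        ≤ (F.biUnion (fun z => (wreach G le t z).toFinset)).card := by
          rw [← Set.ncard_coe_finset]
          exact Set.ncard_le_ncard hsub2 (Set.toFinite _)
      _ ≤ ∑ z ∈ F, (wreach G le t z).toFinset.card := Finset.card_biUnion_le
      _ ≤ ∑ _z ∈ F, S ^ t := by
          apply Finset.sum_le_sum
          intro z _
          rw [← Set.ncard_eq_toFinset_card']
          exact ih (by omega) z
      _ = F.card * S ^ t := by rw [Finset.sum_const, smul_eq_mul]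
      _ ≤ S * S ^ t := by
          apply Nat.mul_le_mul_right
          have h1 : F.card = (sreach G le (t+1) x).ncard := by
            rw [hF, Set.ncard_eq_toFinset_card']
          rw [h1]
          calc (sreach G le (t+1) x).ncard ≤ (sreach G le s x).ncard :=
                Set.ncard_le_ncard (sreach_mono hts) (Set.toFinite _)
            _ ≤ S := ncard_sreach_le
      _ = S ^ (t+1) := by rw [pow_succ, Nat.mul_comm]

lemma wcolOn_le_scolOn_pow (hrefl : ∀ v, le v v) (htot : ∀ u v, le u v ∨ le v u)
    (s : ℕ) : wcolOn G le s ≤ scolOn G le s ^ s := by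
  apply Finset.sup_le
  intro x _
  rw [Nat.card_coe_set_eq]
  exact ncard_wreach_le_pow hrefl htot s le_rfl x

end Pow

section GlobalBounds

variable {V : Type*} [Fintype V] {G : SimpleGraph V}

noncomputable instance : Nonempty (LinearOrder V) :=
  ⟨LinearOrder.lift' (Fintype.equivFin V) (Fintype.equivFin V).injective⟩

lemma wcol_le_wcolOn (σ : LinearOrder V) (r : ℕ) : wcol G r ≤ wcolOn G σ.le r :=
  Nat.sInf_le ⟨σ, rfl⟩

lemma exists_scol_opt (r : ℕ) : ∃ σ : LinearOrder V, scolOn G σ.le r = scol G r := by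
  have := Nat.sInf_mem (Set.range_nonempty (fun σ : LinearOrder V => scolOn G σ.le r))
  obtain ⟨σ, hσ⟩ := this
  exact ⟨σ, hσ⟩

lemma exists_wcol_opt (r : ℕ) : ∃ σ : LinearOrder V, wcolOn G σ.le r = wcol G r := by
  have := Nat.sInf_mem (Set.range_nonempty (fun σ : LinearOrder V => wcolOn G σ.le r))
  obtain ⟨σ, hσ⟩ := this
  exact ⟨σ, hσ⟩

lemma wcol_le_scol_pow (s : ℕ) : wcol G s ≤ scol G s ^ s := by
  obtain ⟨σ, hσ⟩ := exists_scol_opt (G := G) s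
  calc wcol G s ≤ wcolOn G σ.le s := wcol_le_wcolOn σ s
    _ ≤ scolOn G σ.le s ^ s :=
        wcolOn_le_scolOn_pow (fun v => σ.le_refl v) (fun u v => σ.le_total u v) s
    _ = scol G s ^ s := by rw [hσ]

end GlobalBounds

section Greedy

variable {V : Type*} [Fintype V] [DecidableEq V]

lemma exists_good_vertex (k : ℕ) (W : Fin k → V → Finset V) (c : Fin k → ℕ)
    (hW : ∀ i y, (W i y).card ≤ c i)
    (R : Finset V) (hR : R.Nonempty) :
    ∃ v ∈ R, ∀ i, (R.filter (fun y => v ∈ W i y)).card ≤ (k + 1) * c i := by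
  -- total load bound
  have hsum : ∀ i, ∑ v ∈ R, (R.filter (fun y => v ∈ W i y)).card ≤ c i * R.card := by
    intro i
    calc ∑ v ∈ R, (R.filter (fun y => v ∈ W i y)).card
        = ∑ v ∈ R, ∑ y ∈ R, if v ∈ W i y then 1 else 0 := by
          apply Finset.sum_congr rfl; intro v _; rw [Finset.card_filter]
      _ = ∑ y ∈ R, ∑ v ∈ R, if v ∈ W i y then 1 else 0 := Finset.sum_comm
      _ = ∑ y ∈ R, (R.filter (fun v => v ∈ W i y)).card := by
          apply Finset.sum_congr rfl; intro y _; rw [Finset.card_filter]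
      _ ≤ ∑ _y ∈ R, c i := by
          apply Finset.sum_le_sum
          intro y _
          calc (R.filter (fun v => v ∈ W i y)).card ≤ (W i y).card := by
                apply Finset.card_le_card
                intro v hv
                exact (Finset.mem_filter.mp hv).2
            _ ≤ c i := hW i y
      _ = c i * R.card := by rw [Finset.sum_const, smul_eq_mul, Nat.mul_comm]
  set Bad : Fin k → Finset V :=
    fun i => R.filter (fun v => (k + 1) * c i < (R.filter (fun y => v ∈ W i y)).card) with hBad
  have hbad : ∀ i, (k + 1) * (Bad i).card < R.card := by
    intro i
    rcases Nat.eq_zero_or_pos (Bad i).card with h0 | hpos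
    · rw [h0, Nat.mul_zero]; exact hR.card_pos
    have h2 : (Bad i).card * ((k + 1) * c i + 1) ≤ c i * R.card := by
      calc (Bad i).card * ((k + 1) * c i + 1)
          = ∑ _v ∈ Bad i, ((k + 1) * c i + 1) := by rw [Finset.sum_const, smul_eq_mul]
        _ ≤ ∑ v ∈ Bad i, (R.filter (fun y => v ∈ W i y)).card := by
            apply Finset.sum_le_sum
            intro v hv
            rw [hBad, Finset.mem_filter] at hv
            omega
        _ ≤ ∑ v ∈ R, (R.filter (fun y => v ∈ W i y)).card := by
            apply Finset.sum_le_sum_of_subset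
            rw [hBad]; exact Finset.filter_subset _ _
        _ ≤ c i * R.card := hsum i
    have hc : 0 < c i := by
      rcases Nat.eq_zero_or_pos (c i) with h0 | h
      · exfalso
        rw [h0] at h2
        simp only [Nat.mul_zero, Nat.zero_add, Nat.mul_one, Nat.zero_mul,
          Nat.le_zero] at h2
        omega
      · exact h
    have h3 : c i * ((k + 1) * (Bad i).card) < c i * R.card := by
      calc c i * ((k + 1) * (Bad i).card) = (Bad i).card * ((k + 1) * c i) := by ring
        _ < (Bad i).card * ((k + 1) * c i + 1) := by
            rw [Nat.mul_add, Nat.mul_one]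
            omega
        _ ≤ c i * R.card := h2
    exact Nat.lt_of_mul_lt_mul_left h3
  set BadAll := Finset.univ.biUnion Bad with hBadAll
  have hcard : BadAll.card < R.card := by
    have h1 : BadAll.card ≤ ∑ i, (Bad i).card := Finset.card_biUnion_le
    have h2 : (k + 1) * ∑ i, (Bad i).card ≤ k * (R.card - 1) := by
      calc (k + 1) * ∑ i, (Bad i).card = ∑ i, (k + 1) * (Bad i).card := by
            rw [Finset.mul_sum]
        _ ≤ ∑ _i : Fin k, (R.card - 1) := by
            apply Finset.sum_le_sum
            intro i _
            have := hbad i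
            omega
        _ = k * (R.card - 1) := by rw [Finset.sum_const, smul_eq_mul, Finset.card_univ,
            Fintype.card_fin]
    have hR1 : 1 ≤ R.card := hR.card_pos
    by_contra hno
    push_neg at hno
    have e1 : (k + 1) * R.card ≤ (k + 1) * BadAll.card := Nat.mul_le_mul (le_refl _) hno
    have e2 : (k + 1) * BadAll.card ≤ (k + 1) * ∑ i, (Bad i).card :=
      Nat.mul_le_mul (le_refl _) h1
    have e3 : k * (R.card - 1) ≤ k * R.card := Nat.mul_le_mul (le_refl _) (by omega)
    have e4 : (k + 1) * R.card ≤ k * R.card := le_trans (le_trans e1 e2) (le_trans h2 e3)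
    have e5 : k * R.card + R.card = (k + 1) * R.card := by ring
    linarith
  obtain ⟨v, hvR, hvB⟩ : ∃ v ∈ R, v ∉ BadAll := by
    by_contra hno
    push_neg at hno
    exact absurd (Finset.card_le_card hno) (by omega)
  refine ⟨v, hvR, fun i => ?_⟩
  rw [hBadAll] at hvB
  simp only [Finset.mem_biUnion, Finset.mem_univ, true_and, not_exists] at hvB
  have h6 := hvB i
  rw [hBad, Finset.mem_filter] at h6
  push_neg at h6
  exact h6 hvR

lemma exists_pos (k : ℕ) (W : Fin k → V → Finset V) (c : Fin k → ℕ)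
    (hW : ∀ i y, (W i y).card ≤ c i) :
    ∀ (R : Finset V), ∃ pos : V → ℕ,
      (∀ u ∈ R, ∀ v ∈ R, pos u = pos v → u = v) ∧
      (∀ v ∈ R, pos v < R.card) ∧
      (∀ u ∈ R, ∀ i,
        (R.filter (fun y => pos y ≤ pos u ∧ u ∈ W i y)).card ≤ (k + 1) * c i) := by
  intro R
  induction R using Finset.strongInduction with
  | _ R ih =>
    rcases R.eq_empty_or_nonempty with rfl | hR
    · exact ⟨fun _ => 0, by simp, by simp, by simp⟩
    obtain ⟨v, hvR, hv⟩ := exists_good_vertex k W c hW R hR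
    set R' := R.erase v with hR'
    obtain ⟨pos', hinj', hlt', hload'⟩ := ih R' (Finset.erase_ssubset hvR)
    have hcardR' : R'.card = R.card - 1 := Finset.card_erase_of_mem hvR
    have hR1 : 1 ≤ R.card := hR.card_pos
    set pos : V → ℕ := fun w => if w = v then R.card - 1 else pos' w with hpos
    have hposv : pos v = R.card - 1 := by simp [hpos]
    have hposw : ∀ w, w ≠ v → pos w = pos' w := by
      intro w hw; simp [hpos, hw]
    have hlt : ∀ w ∈ R, pos w < R.card := by
      intro w hw
      by_cases hwv : w = v
      · rw [hwv, hposv]; omega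
      · rw [hposw w hwv]
        have : w ∈ R' := Finset.mem_erase.mpr ⟨hwv, hw⟩
        have := hlt' w this
        omega
    have hlt2 : ∀ w ∈ R, w ≠ v → pos w < R.card - 1 := by
      intro w hw hwv
      rw [hposw w hwv]
      have : w ∈ R' := Finset.mem_erase.mpr ⟨hwv, hw⟩
      have := hlt' w this
      omega
    refine ⟨pos, ?_, hlt, ?_⟩
    · intro a ha b hb hab
      by_cases hav : a = v <;> by_cases hbv : b = v
      · rw [hav, hbv]
      · exfalso
        rw [hav, hposv, hposw b hbv] at hab
        have := hlt2 b hb hbv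
        rw [hposw b hbv] at this
        omega
      · exfalso
        rw [hbv, hposv, hposw a hav] at hab
        have := hlt2 a ha hav
        rw [hposw a hav] at this
        omega
      · exact hinj' a (Finset.mem_erase.mpr ⟨hav, ha⟩) b (Finset.mem_erase.mpr ⟨hbv, hb⟩)
          (by rw [hposw a hav, hposw b hbv] at hab; exact hab)
    · intro u hu i
      by_cases huv : u = v
      · subst huv
        calc (R.filter (fun y => pos y ≤ pos u ∧ u ∈ W i y)).card
            ≤ (R.filter (fun y => u ∈ W i y)).card := by
              apply Finset.card_le_card
              intro y hy
              rw [Finset.mem_filter] at hy ⊢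
              exact ⟨hy.1, hy.2.2⟩
          _ ≤ (k + 1) * c i := hv i
      · calc (R.filter (fun y => pos y ≤ pos u ∧ u ∈ W i y)).card
            ≤ (R'.filter (fun y => pos' y ≤ pos' u ∧ u ∈ W i y)).card := by
              apply Finset.card_le_card
              intro y hy
              rw [Finset.mem_filter] at hy
              obtain ⟨hyR, hyle, hyW⟩ := hy
              have hyv : y ≠ v := by
                rintro rfl
                rw [hposv] at hyle
                have := hlt2 u hu huv
                omega
              rw [Finset.mem_filter]
              refine ⟨Finset.mem_erase.mpr ⟨hyv, hyR⟩, ?_, hyW⟩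
              rw [← hposw y hyv, ← hposw u huv]
              exact hyle
          _ ≤ (k + 1) * c i := hload' u (Finset.mem_erase.mpr ⟨huv, hu⟩) i

lemma main_count (G : SimpleGraph V) (σ : LinearOrder V) (pos : V → ℕ)
    (rr cc kk : ℕ) (hcc : 1 ≤ cc)
    (hW : ∀ y : V, (wreach G σ.le rr y).ncard ≤ cc)
    (hinv : ∀ u : V, (Finset.univ.filter
      (fun y => pos y ≤ pos u ∧ u ∈ (Set.toFinite (wreach G σ.le rr y)).toFinset)).card
        ≤ (kk + 1) * cc) (x : V) :
    (sreach G (fun a b => pos a ≤ pos b) rr x).ncard ≤ (kk + 1) * cc ^ 2 := by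
  set A : Set V := wreach G σ.le rr x \ {x} with hA
  set Bfin : Finset V := (Finset.univ.filter
    (fun y => pos y ≤ pos x ∧ x ∈ (Set.toFinite (wreach G σ.le rr y)).toFinset)).erase x
    with hB
  set Cfin : Finset V := ((Set.toFinite A).toFinset).biUnion
    (fun μ => (Finset.univ.filter
      (fun y => pos y ≤ pos μ ∧ μ ∈ (Set.toFinite (wreach G σ.le rr y)).toFinset)).erase μ)
    with hC
  have hsub : sreach G (fun a b => pos a ≤ pos b) rr x ⊆ (({x} ∪ A) ∪ ↑Bfin) ∪ ↑Cfin := by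
    rintro y ⟨hyx, p, hp, hl, hstrong⟩
    by_cases hxy : y = x
    · exact Or.inl (Or.inl (Or.inl hxy))
    set T := p.support.toFinset with hT
    have hTne : T.Nonempty := ⟨x, by rw [hT, List.mem_toFinset]; exact p.start_mem_support⟩
    set μ := @Finset.min' V σ T hTne with hμ
    have hμsup : μ ∈ p.support := by
      rw [← List.mem_toFinset]
      exact Finset.min'_mem T hTne
    have hμle : ∀ z ∈ p.support, σ.le μ z := by
      intro z hz
      exact Finset.min'_le T z (List.mem_toFinset.mpr hz)
    by_cases hμy : μ = y
    · -- y is the σ-minimum: y weakly reachable from x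
      refine Or.inl (Or.inl (Or.inr ⟨⟨?_, p, hp, hl, ?_⟩, hxy⟩))
      · exact hμy ▸ hμle x p.start_mem_support
      · intro z hz
        exact hμy ▸ hμle z hz
    by_cases hμx : μ = x
    · -- x is the σ-minimum: x weakly reachable from y
      have hxwy : x ∈ wreach G σ.le rr y := by
        refine ⟨hμx ▸ hμle y p.end_mem_support, p.reverse, hp.reverse, ?_, ?_⟩
        · rw [Walk.length_reverse]; exact hl
        · intro z hz
          rw [Walk.support_reverse, List.mem_reverse] at hz
          exact hμx ▸ hμle z hz
      refine Or.inl (Or.inr ?_)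
      rw [Finset.mem_coe, hB, Finset.mem_erase]
      refine ⟨hxy, ?_⟩
      rw [Finset.mem_filter]
      exact ⟨Finset.mem_univ y, hyx, (Set.Finite.mem_toFinset _).mpr hxwy⟩
    · -- interior minimum
      have hxμ : pos x ≤ pos μ := hstrong μ hμsup hμy
      have hμwx : μ ∈ wreach G σ.le rr x := by
        refine ⟨hμle x p.start_mem_support, p.takeUntil μ hμsup, hp.takeUntil hμsup, ?_, ?_⟩
        · exact (Walk.length_takeUntil_le p hμsup).trans hl
        · intro z hz
          exact hμle z (Walk.support_takeUntil_subset p hμsup hz)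
      have hμrev : μ ∈ p.reverse.support := by
        rw [Walk.support_reverse, List.mem_reverse]; exact hμsup
      have hμwy : μ ∈ wreach G σ.le rr y := by
        refine ⟨hμle y p.end_mem_support, p.reverse.takeUntil μ hμrev,
          hp.reverse.takeUntil hμrev, ?_, ?_⟩
        · exact (Walk.length_takeUntil_le _ hμrev).trans (by rw [Walk.length_reverse]; exact hl)
        · intro z hz
          have := Walk.support_takeUntil_subset _ hμrev hz
          rw [Walk.support_reverse, List.mem_reverse] at this
          exact hμle z this
      refine Or.inr ?_
      rw [Finset.mem_coe, hC, Finset.mem_biUnion]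
      refine ⟨μ, ?_, ?_⟩
      · rw [Set.Finite.mem_toFinset, hA]
        exact ⟨hμwx, hμx⟩
      · rw [Finset.mem_erase, Finset.mem_filter]
        exact ⟨fun h => hμy h.symm, Finset.mem_univ y, le_trans hyx hxμ,
          (Set.Finite.mem_toFinset _).mpr hμwy⟩
  -- cardinalities
  have hAcard : A.ncard ≤ cc - 1 := by
    rw [hA, Set.ncard_diff_singleton_of_mem (self_mem_wreach (σ.le_refl x))]
    have := hW x
    omega
  have hBcard : Bfin.card ≤ (kk + 1) * cc - 1 := by
    rw [hB, Finset.card_erase_of_mem]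
    · have := hinv x
      omega
    · rw [Finset.mem_filter]
      exact ⟨Finset.mem_univ x, le_refl _,
        (Set.Finite.mem_toFinset _).mpr (self_mem_wreach (σ.le_refl x))⟩
  have hCcard : Cfin.card ≤ (cc - 1) * ((kk + 1) * cc - 1) := by
    rw [hC]
    calc ((Set.toFinite A).toFinset.biUnion _).card
        ≤ ∑ μ ∈ (Set.toFinite A).toFinset, ((Finset.univ.filter
            (fun y => pos y ≤ pos μ ∧ μ ∈ (Set.toFinite (wreach G σ.le rr y)).toFinset)).erase
              μ).card := Finset.card_biUnion_le
      _ ≤ ∑ _μ ∈ (Set.toFinite A).toFinset, ((kk + 1) * cc - 1) := by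
          apply Finset.sum_le_sum
          intro μ hμA
          by_cases hμmem : μ ∈ Finset.univ.filter
              (fun y => pos y ≤ pos μ ∧ μ ∈ (Set.toFinite (wreach G σ.le rr y)).toFinset)
          · rw [Finset.card_erase_of_mem hμmem]
            have := hinv μ
            omega
          · rw [Finset.erase_eq_of_notMem hμmem]
            exfalso
            apply hμmem
            rw [Finset.mem_filter]
            refine ⟨Finset.mem_univ μ, le_refl _, ?_⟩
            rw [Set.Finite.mem_toFinset]
            exact self_mem_wreach (σ.le_refl μ)
      _ = (Set.toFinite A).toFinset.card * ((kk + 1) * cc - 1) := by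
          rw [Finset.sum_const, smul_eq_mul]
      _ ≤ (cc - 1) * ((kk + 1) * cc - 1) := by
          apply Nat.mul_le_mul_right
          rw [← Set.ncard_eq_toFinset_card A (Set.toFinite A)]
          exact hAcard
  have harith : 1 + (cc - 1) + ((kk + 1) * cc - 1) + (cc - 1) * ((kk + 1) * cc - 1)
      = (kk + 1) * cc ^ 2 := by
    obtain ⟨a, rfl⟩ := Nat.exists_eq_add_of_le hcc
    have hm : 1 ≤ (kk + 1) * (1 + a) := Nat.one_le_iff_ne_zero.mpr (Nat.mul_ne_zero (by omega) (by omega))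
    obtain ⟨m', hm'⟩ := Nat.exists_eq_add_of_le hm
    rw [pow_two, ← Nat.mul_assoc, hm']
    simp only [Nat.add_sub_cancel_left]
    ring
  calc (sreach G (fun a b => pos a ≤ pos b) rr x).ncard
      ≤ ((({x} ∪ A) ∪ ↑Bfin) ∪ ↑Cfin).ncard := Set.ncard_le_ncard hsub (Set.toFinite _)
    _ ≤ (({x} ∪ A) ∪ ↑Bfin).ncard + (↑Cfin : Set V).ncard := Set.ncard_union_le _ _
    _ ≤ (({x} : Set V) ∪ A).ncard + (↑Bfin : Set V).ncard + (↑Cfin : Set V).ncard := by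
        have := Set.ncard_union_le (({x} : Set V) ∪ A) (↑Bfin : Set V)
        omega
    _ ≤ ({x} : Set V).ncard + A.ncard + (↑Bfin : Set V).ncard + (↑Cfin : Set V).ncard := by
        have := Set.ncard_union_le ({x} : Set V) A
        omega
    _ ≤ 1 + (cc - 1) + ((kk + 1) * cc - 1) + (cc - 1) * ((kk + 1) * cc - 1) := by
        rw [Set.ncard_singleton, Set.ncard_coe_finset, Set.ncard_coe_finset]
        omega
    _ = (kk + 1) * cc ^ 2 := harith

end Greedy

/-- a single ordering good for several graphs on a common
vertex set, each with its own distance. -/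
theorem uniform_order_many_graphs {V : Type*} [Fintype V] (k : ℕ)
    (G : Fin k → SimpleGraph V) (r : Fin k → ℕ) (hr : ∀ i, 0 < r i) :
    ∃ σ : LinearOrder V, ∀ i,
      scolOn (G i) σ.le (r i) ≤ (k + 1) * (wcol (G i) (2 * r i)) ^ 2 ∧
      (k + 1) * (wcol (G i) (2 * r i)) ^ 2 ≤
        (k + 1) * (scol (G i) (2 * r i)) ^ (4 * r i) := by
  classical
  have hpart2 : ∀ i, (k + 1) * (wcol (G i) (2 * r i)) ^ 2 ≤
      (k + 1) * (scol (G i) (2 * r i)) ^ (4 * r i) := by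
    intro i
    apply Nat.mul_le_mul (le_refl (k + 1))
    have h1 : wcol (G i) (2 * r i) ≤ scol (G i) (2 * r i) ^ (2 * r i) :=
      wcol_le_scol_pow _
    calc (wcol (G i) (2 * r i)) ^ 2
        ≤ (scol (G i) (2 * r i) ^ (2 * r i)) ^ 2 := Nat.pow_le_pow_left h1 2
      _ = scol (G i) (2 * r i) ^ (4 * r i) := by
          rw [← pow_mul]
          congr 1
          ring
  rcases isEmpty_or_nonempty V with hV | hV
  · refine ⟨Classical.arbitrary _, fun i => ⟨?_, hpart2 i⟩⟩
    rw [scolOn, Finset.univ_eq_empty, Finset.sup_empty]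
    exact Nat.zero_le _
  · choose σo hσo using fun i => exists_wcol_opt (G := G i) (2 * r i)
    set c : Fin k → ℕ := fun i => wcol (G i) (2 * r i) with hc
    set W : Fin k → V → Finset V :=
      fun i y => (Set.toFinite (wreach (G i) (σo i).le (r i) y)).toFinset with hWdef
    have hW : ∀ i y, (W i y).card ≤ c i := by
      intro i y
      rw [hWdef, ← Set.ncard_eq_toFinset_card]
      calc (wreach (G i) (σo i).le (r i) y).ncard
          ≤ wcolOn (G i) (σo i).le (r i) := ncard_wreach_le
        _ ≤ wcolOn (G i) (σo i).le (2 * r i) := wcolOn_mono (by omega)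
        _ = c i := hσo i
    obtain ⟨pos, hinj, _, hload⟩ := exists_pos k W c hW Finset.univ
    have hinj' : Function.Injective pos := fun a b h =>
      hinj a (Finset.mem_univ a) b (Finset.mem_univ b) h
    refine ⟨LinearOrder.lift' pos hinj', fun i => ⟨?_, hpart2 i⟩⟩
    have hcc : 1 ≤ c i := by
      rw [show c i = wcol (G i) (2 * r i) from rfl, ← hσo i]
      have hx := Classical.arbitrary V
      calc 1 ≤ (wreach (G i) (σo i).le (2 * r i) hx).ncard := by
            rw [Nat.one_le_iff_ne_zero, ← Nat.pos_iff_ne_zero]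
            exact (Set.ncard_pos (Set.toFinite _)).mpr
              ⟨hx, self_mem_wreach ((σo i).le_refl hx)⟩
        _ ≤ wcolOn (G i) (σo i).le (2 * r i) := ncard_wreach_le
    have hle : (LinearOrder.lift' pos hinj').le = fun a b => pos a ≤ pos b := rfl
    rw [scolOn]
    apply Finset.sup_le
    intro x _
    rw [Nat.card_coe_set_eq]
    have hinv : ∀ u : V, (Finset.univ.filter
        (fun y => pos y ≤ pos u ∧
          u ∈ (Set.toFinite (wreach (G i) (σo i).le (r i) y)).toFinset)).card
          ≤ (k + 1) * c i := by
      intro u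
      have := hload u (Finset.mem_univ u) i
      rw [hWdef] at this
      exact this
    have hmain := main_count (G i) (σo i) pos (r i) (c i) k hcc
      (fun y => by
        calc (wreach (G i) (σo i).le (r i) y).ncard
            ≤ wcolOn (G i) (σo i).le (r i) := ncard_wreach_le
          _ ≤ wcolOn (G i) (σo i).le (2 * r i) := wcolOn_mono (by omega)
          _ = c i := hσo i) hinv x
    rw [hle]
    exact hmain
end
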